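/- arXiv:2001.01125 — 5 statements merged into one kernel-verified Lean document; each statement's English description precedes it below -/
import Mathlib

section
/- For every number of bins m ≥ 2, the Adversary has a winning strategy in the Online Bin Stretching game Game(m, 4, 3); consequently no online bin stretching algorithm on m bins has stretching factor smaller than 4/3. -/
/-- `AddToBin St e b` increases the load of the `b`-th bin of `St` by `e`
(appending a new bin of load `e` if `b` is beyond the length of `St`). -/
def AddToBin : List ℕ → ℕ → ℕ → List ℕ
  | [], e, _ => [e]
  | x :: s, e, 0 => (x + e) :: s
  | x :: s, e, k + 1 => x :: AddToBin s e k

/-- The load of the most loaded bin. -/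
def MaxBinValue (St : List ℕ) : ℕ := St.foldr max 0

/-- `Packable m g ℓ` : the items of `ℓ` can be packed into `m` bins,
each of total size at most `g`. -/
def Packable (m g : ℕ) (ℓ : List ℕ) : Prop :=
  ∃ P : List (List ℕ), P.length = m ∧ (∀ B ∈ P, B.sum ≤ g) ∧ P.flatten.Perm ℓ

/-- `AdvWins m t g ℓ St` : the Adversary has a winning strategy in the Online Bin
Stretching game `Game(m,t,g)` starting from the previously sent items `ℓ` and the
current bin loads `St` — the property `LowerBoundBS(ℓ, St)`.  Either the Adversary
has already won (some bin has load at least `t`, and all items sent so far can be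
packed into `m` bins of capacity `g`), or the Adversary can send some positive item
`e` such that whatever bin `b < m` the Algorithm packs it into, the Adversary still
has a winning strategy. -/
inductive AdvWins (m t g : ℕ) : List ℕ → List ℕ → Prop
  | win (ℓ St : List ℕ) : t ≤ MaxBinValue St → Packable m g ℓ → AdvWins m t g ℓ St
  | step (ℓ St : List ℕ) (e : ℕ) : 0 < e →
      (∀ b, b < m → AdvWins m t g (e :: ℓ) (AddToBin St e b)) →
      AdvWins m t g ℓ St

/- ### Basic facts about `AddToBin` -/

lemma length_addToBin (St : List ℕ) (e b : ℕ) (h : b < St.length) :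
    (AddToBin St e b).length = St.length := by
  induction St generalizing b with
  | nil => simp at h
  | cons x s ih =>
    cases b with
    | zero => simp [AddToBin]
    | succ k => simp only [AddToBin, List.length_cons]; rw [ih]; simpa using h

lemma sum_addToBin (St : List ℕ) (e b : ℕ) :
    (AddToBin St e b).sum = St.sum + e := by
  induction St generalizing b with
  | nil => simp [AddToBin]
  | cons x s ih =>
    cases b with
    | zero => simp [AddToBin]; ring
    | succ k => simp [AddToBin, ih]; ring

lemma mem_addToBin_self (St : List ℕ) (e b : ℕ) (h : b < St.length) :
    St.get ⟨b, h⟩ + e ∈ AddToBin St e b := by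
  induction St generalizing b with
  | nil => simp at h
  | cons x s ih =>
    cases b with
    | zero => simp [AddToBin]
    | succ k => simp only [AddToBin, List.get, List.mem_cons]; right; exact ih k (by simpa using h)

lemma mem_addToBin (St : List ℕ) (e b x : ℕ) (h : b < St.length)
    (hx : x ∈ AddToBin St e b) : x ∈ St ∨ x = St.get ⟨b, h⟩ + e := by
  induction St generalizing b with
  | nil => simp at h
  | cons y s ih =>
    cases b with
    | zero =>
      rcases List.mem_cons.mp hx with h1 | h1
      · right; simpa using h1
      · left; exact List.mem_cons_of_mem _ h1
    | succ k =>
      rcases List.mem_cons.mp hx with h1 | h1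
      · left; simp [h1]
      · rcases ih k (by simpa using h) h1 with h2 | h2
        · left; exact List.mem_cons_of_mem _ h2
        · right; simpa using h2

lemma le_maxBinValue {x : ℕ} {St : List ℕ} (hx : x ∈ St) : x ≤ MaxBinValue St := by
  induction St with
  | nil => simp at hx
  | cons y s ih =>
    rcases List.mem_cons.mp hx with h | h
    · simp [MaxBinValue, h]
    · exact le_trans (ih h) (by simp [MaxBinValue])

/- ### Counting light bins -/

def CntLE1 (St : List ℕ) : ℕ := St.countP (fun x => x ≤ 1)

lemma cntLE1_pos (St : List ℕ) (b : ℕ) (h : b < St.length) (hb : St.get ⟨b, h⟩ ≤ 1) :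
    0 < CntLE1 St :=
  List.countP_pos_iff.mpr ⟨_, St.get_mem ⟨b, h⟩, by simpa using hb⟩

lemma cntLE1_addToBin (St : List ℕ) (e b : ℕ) (h : b < St.length)
    (hb : St.get ⟨b, h⟩ ≤ 1) (he : 2 ≤ St.get ⟨b, h⟩ + e) :
    CntLE1 (AddToBin St e b) + 1 = CntLE1 St := by
  induction St generalizing b with
  | nil => simp at h
  | cons x s ih =>
    cases b with
    | zero =>
      simp only [List.get] at hb he
      simp [CntLE1, AddToBin, List.countP_cons, hb, Nat.not_le.mpr he]
    | succ k =>
      simp only [List.get] at hb he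
      have := ih k (by simpa using h) hb he
      simp only [CntLE1, AddToBin, List.countP_cons] at *
      omega

/- ### Packability of the lists of items the Adversary sends -/

lemma count_flatten_replicate (a : ℕ) (n : ℕ) (l : List ℕ) :
    (List.flatten (List.replicate n l)).count a = n * l.count a := by
  induction n with
  | zero => simp
  | succ k ih => simp [List.replicate_succ, List.count_append, ih]; ring

lemma packable_twos_ones (m j k : ℕ) (hj : j ≤ m) (hk : k ≤ m) :
    Packable m 3 (List.replicate j 2 ++ List.replicate k 1) := by
  set p := min j k with hp
  refine ⟨List.replicate p [2,1] ++ List.replicate (j-p) [2] ++ List.replicate (k-p) [1]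
            ++ List.replicate (m - (j + k - p)) [], ?_, ?_, ?_⟩
  · simp; omega
  · intro B hB
    simp only [List.mem_append, List.mem_replicate] at hB
    rcases hB with ((h|h)|h)|h <;> simp [h.2]
  · rw [List.perm_iff_count]
    intro a
    simp only [List.flatten_append, List.count_append, count_flatten_replicate]
    by_cases h2 : a = 2
    · subst h2; simp [List.count_replicate]; omega
    · by_cases h1 : a = 1
      · subst h1; simp [List.count_replicate]; omega
      · simp [List.count_replicate, List.count_cons, h1, h2, Ne.symm h1, Ne.symm h2]

lemma packable_three_ones (m : ℕ) (hm : 2 ≤ m) :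
    Packable m 3 (3 :: List.replicate m 1) := by
  refine ⟨[3] :: [1,1] :: List.replicate (m-2) [1], by simp; omega, ?_, ?_⟩
  · intro B hB
    simp only [List.mem_cons, List.mem_replicate] at hB
    rcases hB with h | h | h <;> simp [h]
  · have hrep : List.replicate m 1 = 1 :: 1 :: List.replicate (m-2) (1:ℕ) := by
      rw [show m = (m-2)+2 by omega]; simp [List.replicate_succ]
    have hfl : (List.replicate (m-2) [(1:ℕ)]).flatten = List.replicate (m-2) 1 := by
      induction (m-2) with
      | zero => simp
      | succ n ih => simp [List.replicate_succ, ih]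
    simp [hrep, hfl]

/- ### Phase 2: the Adversary keeps sending items of size 2 -/

lemma twosPhase (m : ℕ) (n : ℕ) : ∀ k j (St : List ℕ), St.length = m → CntLE1 St ≤ n →
    k ≤ m → j + n + 1 ≤ m →
    AdvWins m 4 3 (List.replicate j 2 ++ List.replicate k 1) St := by
  induction n with
  | zero =>
    intro k j St hlen hC hk hj
    apply AdvWins.step _ _ 2 (by norm_num)
    intro b hb
    have hbl : b < St.length := by omega
    have hge : ¬ St.get ⟨b, hbl⟩ ≤ 1 := fun h => by have := cntLE1_pos St b hbl h; omega
    apply AdvWins.win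
    · have := le_maxBinValue (mem_addToBin_self St 2 b hbl)
      omega
    · rw [show (2 :: (List.replicate j 2 ++ List.replicate k 1)) =
          List.replicate (j+1) 2 ++ List.replicate k 1 by simp [List.replicate_succ]]
      exact packable_twos_ones m (j+1) k (by omega) hk
  | succ n ih =>
    intro k j St hlen hC hk hj
    apply AdvWins.step _ _ 2 (by norm_num)
    intro b hb
    have hbl : b < St.length := by omega
    by_cases hle : St.get ⟨b, hbl⟩ ≤ 1
    · have hcnt := cntLE1_addToBin St 2 b hbl hle (by omega)
      have hlen' : (AddToBin St 2 b).length = m := by rw [length_addToBin St 2 b hbl, hlen]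
      rw [show (2 :: (List.replicate j 2 ++ List.replicate k 1)) =
          List.replicate (j+1) 2 ++ List.replicate k 1 by simp [List.replicate_succ]]
      exact ih k (j+1) _ hlen' (by omega) hk (by omega)
    · apply AdvWins.win
      · have := le_maxBinValue (mem_addToBin_self St 2 b hbl)
        omega
      · rw [show (2 :: (List.replicate j 2 ++ List.replicate k 1)) =
            List.replicate (j+1) 2 ++ List.replicate k 1 by simp [List.replicate_succ]]
        exact packable_twos_ones m (j+1) k (by omega) hk

/- ### auxiliary: lists of zeros and ones -/

lemma sum_le_length (l : List ℕ) (h : ∀ x ∈ l, x ≤ 1) : l.sum ≤ l.length := by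
  induction l with
  | nil => simp
  | cons y s ih =>
    simp only [List.sum_cons, List.length_cons]
    have := h y (by simp)
    have := ih (fun x hx => h x (by simp [hx]))
    omega

lemma all_eq_one {l : List ℕ} (h : ∀ x ∈ l, x ≤ 1) (hs : l.sum = l.length) :
    ∀ x ∈ l, x = 1 := by
  induction l with
  | nil => simp
  | cons y s ih =>
    have hy := h y (by simp)
    have hs' : s.sum ≤ s.length := sum_le_length s (fun x hx => h x (by simp [hx]))
    simp only [List.sum_cons, List.length_cons] at hs
    intro x hx
    rcases List.mem_cons.mp hx with rfl | hx
    · omega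
    · exact ih (fun z hz => h z (by simp [hz])) (by omega) x hx

/- ### Phase 1: the Adversary sends items of size 1 -/

lemma onesPhase (m : ℕ) (hm : 2 ≤ m) (d : ℕ) : ∀ k (St : List ℕ), St.length = m →
    St.sum = k → k + d = m → (∀ x ∈ St, x ≤ 1) →
    AdvWins m 4 3 (List.replicate k 1) St := by
  induction d with
  | zero =>
    intro k St hlen hsum hkd hall
    have hone : ∀ x ∈ St, x = 1 := all_eq_one hall (by omega)
    apply AdvWins.step _ _ 3 (by norm_num)
    intro b hb
    have hbl : b < St.length := by omega
    have hget : St.get ⟨b, hbl⟩ = 1 := hone _ (St.get_mem _)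
    apply AdvWins.win
    · have := le_maxBinValue (mem_addToBin_self St 3 b hbl)
      omega
    · rw [show k = m by omega]
      exact packable_three_ones m hm
  | succ d ih =>
    intro k St hlen hsum hkd hall
    apply AdvWins.step _ _ 1 (by norm_num)
    intro b hb
    have hbl : b < St.length := by omega
    have hgle : St.get ⟨b, hbl⟩ ≤ 1 := hall _ (St.get_mem _)
    have hlen' : (AddToBin St 1 b).length = m := by rw [length_addToBin St 1 b hbl, hlen]
    rw [show (1 :: List.replicate k 1) = List.replicate (k+1) 1 by simp [List.replicate_succ]]
    by_cases h0 : St.get ⟨b, hbl⟩ = 0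
    · apply ih (k+1) _ hlen' (by rw [sum_addToBin, hsum]) (by omega)
      intro x hx
      rcases mem_addToBin St 1 b x hbl hx with h | h
      · exact hall x h
      · omega
    · have hcnt := cntLE1_addToBin St 1 b hbl hgle (by omega)
      have hCle : CntLE1 St ≤ St.length := List.countP_le_length
      have := twosPhase m (m-1) (k+1) 0 _ hlen' (by omega) (by omega) (by omega)
      simpa using this

/-- For every number of bins `m ≥ 2`, the Adversary has a winning strategy in the
Online Bin Stretching game `Game(m, 4, 3)` from the empty item list and all-zero
bin loads; hence no online bin stretching algorithm on `m` bins has stretching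
factor smaller than `4/3`. -/
theorem lowerBoundBS_four_thirds (m : ℕ) (hm : 2 ≤ m) :
    AdvWins m 4 3 [] (List.replicate m 0) := by
  have := onesPhase m hm m 0 (List.replicate m 0) (by simp) (by simp) (by simp)
    (by intro x hx; simp at hx; omega)
  simpa using this
end

section
/- (Good Situation 1) In the Online Bin Stretching game Game(m,t,g) with α := (t−1) − g ≥ 0, let (L, I) be a bin configuration with loads L_1, …, L_m such that the total load of all bins except the last one satisfies L_1 + … + L_{m−1} ≥ (m−1)·g − α. Then the Algorithm has a winning strategy from (L, I): there is a strategy for the Algorithm (packing every further item into the last bin) that, against every continuation of items for which the full multiset of items remains packable into m bins of capacity g, keeps every bin load at most t − 1. -/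
/-- `BinConfig m L I` : `(L, I)` is a bin configuration on `m` bins: `L` is the
`m`-tuple of bin loads and the multiset of items `I` can be packed into the `m`
bins producing exactly the loads `L`. -/
def BinConfig (m : ℕ) (L I : List ℕ) : Prop :=
  L.length = m ∧ ∃ P : List (List ℕ), P.map List.sum = L ∧ P.flatten.Perm I

/-- `RunAlg σ hist St es` : the bin loads obtained from the loads `St` after the
sequence of items `es` has arrived (one at a time) and each item has been packed by
the online strategy `σ`, which chooses a bin given the items sent so far, the
current loads and the incoming item; `hist` is the list of previously sent items. -/
def RunAlg (σ : List ℕ → List ℕ → ℕ → ℕ) : List ℕ → List ℕ → List ℕ → List ℕ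
  | _, St, [] => St
  | hist, St, e :: es => RunAlg σ (e :: hist) (AddToBin St e (σ hist St e)) es

/-- `AlgWins m t g ℓ St` : the Algorithm has a winning strategy in the Online Bin
Stretching game `Game(m,t,g)` from the state with already-sent items `ℓ` and bin
loads `St`: there is an online strategy (always choosing a bin index `< m`) such
that, against every continuation `es` of positive items for which the full multiset
of items remains packable into `m` bins of capacity `g`, every bin load stays at
most `t - 1` (loads only grow, so it suffices that the final loads are at most
`t - 1` for every admissible continuation, each prefix of an admissible continuation
being itself admissible). -/
def AlgWins (m t g : ℕ) (ℓ St : List ℕ) : Prop :=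
  ∃ σ : List ℕ → List ℕ → ℕ → ℕ,
    (∀ hist L e, σ hist L e < m) ∧
    ∀ es : List ℕ, (∀ e ∈ es, 0 < e) → Packable m g (es ++ ℓ) →
      MaxBinValue (RunAlg σ ℓ St es) ≤ t - 1

lemma maxBinValue_le_iff (l : List ℕ) (n : ℕ) :
    MaxBinValue l ≤ n ↔ ∀ x ∈ l, x ≤ n := by
  induction l with
  | nil => simp [MaxBinValue]
  | cons a l ih =>
    rw [show MaxBinValue (a :: l) = max a (MaxBinValue l) from rfl, Nat.max_le, ih]
    simp

lemma addToBin_length (l : List ℕ) (e k : ℕ) (hk : k < l.length) :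
    (AddToBin l e k).length = l.length := by
  induction l generalizing k with
  | nil => simp at hk
  | cons x s ih =>
    cases k with
    | zero => simp [AddToBin]
    | succ k' => simp at hk; simp [AddToBin, ih k' hk]

lemma addToBin_addToBin (l : List ℕ) (a b k : ℕ) (hk : k < l.length) :
    AddToBin (AddToBin l a k) b k = AddToBin l (a + b) k := by
  induction l generalizing k with
  | nil => simp at hk
  | cons x s ih =>
    cases k with
    | zero => simp [AddToBin, Nat.add_assoc]
    | succ k' => simp at hk; simp [AddToBin, ih k' hk]

lemma addToBin_zero (l : List ℕ) (k : ℕ) (hk : k < l.length) : AddToBin l 0 k = l := by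
  induction l generalizing k with
  | nil => simp at hk
  | cons x s ih =>
    cases k with
    | zero => simp [AddToBin]
    | succ k' => simp at hk; simp [AddToBin, ih k' hk]

lemma runAlg_const (m : ℕ) (hist St es : List ℕ) (hk : m - 1 < St.length) :
    RunAlg (fun _ _ _ => m - 1) hist St es = AddToBin St es.sum (m - 1) := by
  induction es generalizing hist St with
  | nil => simp [RunAlg, addToBin_zero St (m - 1) hk]
  | cons e es ih =>
    have hk' : m - 1 < (AddToBin St e (m - 1)).length := by
      rw [addToBin_length St e (m - 1) hk]; exact hk
    rw [RunAlg, ih _ _ hk', addToBin_addToBin St e es.sum (m - 1) hk]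
    simp

lemma addToBin_last (l : List ℕ) (s k : ℕ) (hl : l.length = k + 1) :
    AddToBin l s k = l.dropLast ++ [l.getLastD 0 + s] := by
  induction l generalizing k with
  | nil => simp at hl
  | cons x t ih =>
    cases t with
    | nil =>
      simp at hl
      subst hl
      simp [AddToBin]
    | cons y u =>
      cases k with
      | zero => simp at hl
      | succ k' =>
        simp at hl
        rw [AddToBin, ih k' (by simp [hl])]
        simp

lemma dropLast_sum_add_getLastD (l : List ℕ) (h : l ≠ []) :
    l.dropLast.sum + l.getLastD 0 = l.sum := by
  conv_rhs => rw [← List.dropLast_append_getLast h]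
  simp [List.getLastD_eq_getLast?, List.getLast?_eq_getLast h]

/-- Good Situation 1: in `Game(m,t,g)` with `α = (t-1) - g ≥ 0`, if `(L, I)` is a
bin configuration (with all loads at most `t-1`, as for every state reached in the
game) whose total load on all bins but the last one is at least `(m-1)·g - α`, then
the Algorithm has a winning strategy from `(L, I)`: there is a strategy (packing
every further item into the last bin) keeping every bin load at most `t - 1`
against every continuation that stays packable into `m` bins of capacity `g`. -/
theorem good_situation_one (m t g : ℕ) (hm : 0 < m) (ht : g + 1 ≤ t)
    (L I : List ℕ) (hconf : BinConfig m L I) (hsafe : MaxBinValue L ≤ t - 1)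
    (hload : (m - 1) * g - ((t - 1) - g) ≤ L.dropLast.sum) :
    AlgWins m t g I L := by
  obtain ⟨hlen, P, hPsum, hPperm⟩ := hconf
  have hLne : L ≠ [] := by
    intro h; rw [h] at hlen; simp at hlen; omega
  have hIsum : I.sum = L.sum := by
    rw [← hPsum, ← hPperm.sum_eq]
    simp
  refine ⟨fun _ _ _ => m - 1, fun _ _ _ => Nat.sub_lt hm Nat.one_pos, ?_⟩
  intro es _ hpack
  obtain ⟨Q, hQlen, hQle, hQperm⟩ := hpack
  have hsum : es.sum + I.sum ≤ m * g := by
    have h1 : (es ++ I).sum = (Q.map List.sum).sum := by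
      rw [← hQperm.sum_eq]; simp
    have h2 : (Q.map List.sum).sum ≤ (Q.map List.sum).length • g :=
      List.sum_le_card_nsmul _ _ (by simpa using hQle)
    simp [hQlen, smul_eq_mul] at h2
    have h3 : (es ++ I).sum ≤ m * g := h1 ▸ h2
    simpa using h3
  rw [runAlg_const m I L es (by omega), addToBin_last L es.sum (m - 1) (by omega)]
  rw [maxBinValue_le_iff]
  intro x hx
  rcases List.mem_append.1 hx with hx | hx
  · exact (maxBinValue_le_iff L _).1 hsafe x (List.dropLast_sublist L |>.mem hx)
  · simp at hx
    subst hx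
    have hsplit := dropLast_sum_add_getLastD L hLne
    rw [List.getLastD_eq_getLast?] at hsplit
    have hmg : (m - 1) * g + g = m * g := by
      cases m with
      | zero => omega
      | succ n => simp [Nat.succ_mul]
    omega
end

section
/- (Good Situation 3) In the Online Bin Stretching game Game(m,t,g) with α := (t−1) − g ≥ 0 and m ≥ 3, let (L, I) be a bin configuration with loads sorted in descending order L_1 ≥ L_2 ≥ … ≥ L_m. Let s := L_1 + … + L_{m−2} be the sum of the loads of all bins except the last two; let r (the last bin load requirement) be the smallest load such that if the last bin had load at least r then, after reordering the bins by load, the hypothesis of Good Situation 1 would hold (i.e., the sum of the loads of all bins except the then-least-loaded bin would be at least (m−1)·g − α); and let o := t − r (the overflow). If r ≤ t − 1 and there is a bin A among the last two bins (A = B_{m−1} or A = B_m) whose load satisfies (m−1)·g − α − o − s < load(A) ≤ α, then the Algorithm has a winning strategy from (L, I): there is a strategy for the Algorithm that, against every continuation of items for which the full multiset of items remains packable into m bins of capacity g, keeps every bin load at most t − 1. -/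
/-! ### Auxiliary lemmas for the proof of Good Situation 3 -/

private lemma gs3_foldr_max_le {l : List ℕ} {c : ℕ} (h : ∀ x ∈ l, x ≤ c) :
    l.foldr max 0 ≤ c := by
  induction l with
  | nil => simp
  | cons a l ih =>
    simp only [List.foldr_cons]
    exact max_le (h a (by simp)) (ih fun x hx => h x (by simp [hx]))

private lemma gs3_le_foldr_max {l : List ℕ} {x : ℕ} (h : x ∈ l) : x ≤ l.foldr max 0 := by
  induction l with
  | nil => simp at h
  | cons a l ih =>
    simp only [List.foldr_cons]
    rcases List.mem_cons.mp h with rfl | h'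
    · exact le_max_left _ _
    · exact le_trans (ih h') (le_max_right _ _)

private lemma gs3_AddToBin_length : ∀ (St : List ℕ) (e b : ℕ), b < St.length →
    (AddToBin St e b).length = St.length
  | [], _, _, h => by simp at h
  | x :: s, e, 0, _ => by simp [AddToBin]
  | x :: s, e, b + 1, h => by
    simp only [AddToBin, List.length_cons]
    rw [gs3_AddToBin_length s e b (by simpa using h)]

private lemma gs3_AddToBin_sum : ∀ (St : List ℕ) (e b : ℕ), b < St.length →
    (AddToBin St e b).sum = St.sum + e
  | [], _, _, h => by simp at h
  | x :: s, e, 0, _ => by simp [AddToBin]; omega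
  | x :: s, e, b + 1, h => by
    simp only [AddToBin, List.sum_cons]
    rw [gs3_AddToBin_sum s e b (by simpa using h)]
    omega

private lemma gs3_AddToBin_getD : ∀ (St : List ℕ) (e b i : ℕ), b < St.length →
    (AddToBin St e b).getD i 0 = if b = i then St.getD i 0 + e else St.getD i 0
  | [], _, _, _, h => by simp at h
  | x :: s, e, 0, i, _ => by
    cases i with
    | zero => simp [AddToBin]
    | succ j => simp [AddToBin]
  | x :: s, e, b + 1, i, h => by
    cases i with
    | zero => simp [AddToBin]
    | succ j =>
      simp only [AddToBin, List.getD_cons_succ]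
      rw [gs3_AddToBin_getD s e b j (by simpa using h)]
      by_cases hbj : b = j
      · simp [hbj]
      · rw [if_neg hbj, if_neg (by omega)]

private lemma gs3_AddToBin_mem : ∀ (St : List ℕ) (e b : ℕ), b < St.length →
    ∀ x ∈ AddToBin St e b, x ∈ St ∨ x = St.getD b 0 + e
  | [], _, _, h => by simp at h
  | x :: s, e, 0, _ => by
    intro y hy
    rcases List.mem_cons.mp hy with rfl | h'
    · right; simp
    · left; simp [h']
  | x :: s, e, b + 1, h => by
    intro y hy
    rcases List.mem_cons.mp hy with rfl | h'
    · left; simp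
    · rcases gs3_AddToBin_mem s e b (by simpa using h) y h' with h'' | h''
      · left; simp [h'']
      · right; simpa using h''

private lemma gs3_decomp : ∀ (l : List ℕ) (n : ℕ), l.length = n + 2 →
    l.sum = (l.take n).sum + l.getD n 0 + l.getD (n + 1) 0 ∧
      l.dropLast.sum = (l.take n).sum + l.getD n 0
  | [], n, h => by simp at h
  | x :: s, 0, h => by
    have hs : s.length = 1 := by simpa using h
    cases s with
    | nil => simp at hs
    | cons y s' =>
      have hs' : s' = [] := by
        have : s'.length = 0 := by simpa using hs
        exact List.length_eq_zero_iff.mp this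
      subst hs'
      constructor
      · simp
      · simp [List.dropLast]
  | x :: s, n + 1, h => by
    have hs : s.length = n + 2 := by simpa using h
    obtain ⟨h1, h2⟩ := gs3_decomp s n hs
    have hne : s ≠ [] := by
      intro hh; rw [hh] at hs; simp at hs
    constructor
    · simp only [List.sum_cons, List.take_succ_cons, List.getD_cons_succ, h1]
      omega
    · have hd : (x :: s).dropLast = x :: s.dropLast := by
        cases s with
        | nil => exact absurd rfl hne
        | cons y s' => rfl
      rw [hd]
      simp only [List.sum_cons, List.take_succ_cons, List.getD_cons_succ, h2]
      omega

private lemma gs3_sorted_getD {l : List ℕ} (hs : l.Pairwise (· ≥ ·)) {i j : ℕ}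
    (hij : i ≤ j) (hj : j < l.length) : l.getD j 0 ≤ l.getD i 0 := by
  rcases eq_or_lt_of_le hij with rfl | hlt
  · exact le_refl _
  · have hi : i < l.length := lt_trans hlt hj
    have h := List.pairwise_iff_get.mp hs ⟨i, hi⟩ ⟨j, hj⟩ hlt
    rw [List.getD_eq_getElem l 0 hj, List.getD_eq_getElem l 0 hi]
    simpa using h

private lemma gs3_mem_le_sum (B : List ℕ) (x : ℕ) (h : x ∈ B) : x ≤ B.sum := by
  induction B with
  | nil => simp at h
  | cons b B ih =>
    rcases List.mem_cons.mp h with rfl | h'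
    · simp
    · refine le_trans (ih h') ?_
      simp

private lemma gs3_flatten_sum (P : List (List ℕ)) : P.flatten.sum = (P.map List.sum).sum := by
  induction P with
  | nil => simp
  | cons B P ih => simp [ih]

private lemma gs3_sum_le_len_mul (l : List ℕ) (g : ℕ) (h : ∀ x ∈ l, x ≤ g) :
    l.sum ≤ l.length * g := by
  induction l with
  | nil => simp
  | cons a l ih =>
    have h1 := ih (fun x hx => h x (by simp [hx]))
    have h2 := h a (by simp)
    simp only [List.sum_cons, List.length_cons]
    calc a + l.sum ≤ g + l.length * g := by omega
    _ = (l.length + 1) * g := by ring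

private lemma gs3_packable_sum {m g : ℕ} {ℓ : List ℕ} (h : Packable m g ℓ) :
    ℓ.sum ≤ m * g := by
  obtain ⟨P, hPl, hPb, hperm⟩ := h
  have h1 : ℓ.sum = (P.map List.sum).sum := by
    rw [← hperm.sum_eq, gs3_flatten_sum]
  have h2 : (P.map List.sum).sum ≤ (P.map List.sum).length * g := by
    refine gs3_sum_le_len_mul _ _ ?_
    intro x hx
    obtain ⟨Bb, hB, rfl⟩ := List.mem_map.mp hx
    exact hPb Bb hB
  rw [h1]
  simpa [hPl] using h2

private lemma gs3_packable_mem {m g : ℕ} {ℓ : List ℕ} (h : Packable m g ℓ) :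
    ∀ x ∈ ℓ, x ≤ g := by
  obtain ⟨P, hPl, hPb, hperm⟩ := h
  intro x hx
  have hx' : x ∈ P.flatten := hperm.mem_iff.mpr hx
  obtain ⟨Bb, hB, hxB⟩ := List.mem_flatten.mp hx'
  exact le_trans (gs3_mem_le_sum Bb x hxB) (hPb Bb hB)

/-- The first "first bin" (index `< m - 2`) into which the item `e` fits. -/
def gs3first (m t : ℕ) (St : List ℕ) (e : ℕ) : Option ℕ :=
  (List.range (m - 2)).find? (fun f => decide (St.getD f 0 + e ≤ t - 1))

/-- The strategy for Good Situation 3: first-fit on the first `m - 2` bins,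
then bin `B` if the item fits there, and otherwise bin `A`. -/
def gs3strat (m t A B : ℕ) (hist St : List ℕ) (e : ℕ) : ℕ :=
  match gs3first m t St e with
  | some f => f
  | none => if St.getD B 0 + e ≤ t - 1 then B else A

private lemma gs3strat_lt (m t A B : ℕ) (hAm : A < m) (hBm : B < m)
    (hist St : List ℕ) (e : ℕ) : gs3strat m t A B hist St e < m := by
  unfold gs3strat
  cases hf : gs3first m t St e with
  | some f =>
    have hf2 := hf
    unfold gs3first at hf2
    have hmem := List.mem_of_find?_eq_some hf2
    have : f < m - 2 := List.mem_range.mp hmem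
    show f < m
    omega
  | none =>
    dsimp only
    split <;> assumption

/-- The invariant for Good Situation 3. -/
def GS3Inv (m t g α A B : ℕ) (St : List ℕ) : Prop :=
  St.length = m ∧ (∀ x ∈ St, x ≤ t - 1) ∧
    (m * g + St.getD B 0 ≤ St.sum + (t - 1) ∨
     m * g + St.getD A 0 ≤ St.sum + (t - 1) ∨
     (St.getD A 0 ≤ α ∧
      2 * (m * g) + 2 * St.getD B 0 + St.getD A 0 ≤ 2 * St.sum + 3 * (t - 1) ∧
      ∀ f, f < m - 2 → St.getD A 0 ≤ St.getD f 0))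

private lemma gs3_step (m t g α A B : ℕ) (hm : 3 ≤ m) (hga : g + α = t - 1)
    (hAB : A = m - 2 ∧ B = m - 1 ∨ A = m - 1 ∧ B = m - 2)
    (hist St : List ℕ) (e : ℕ)
    (hInv : GS3Inv m t g α A B St) (heg : e ≤ g) (hbud : St.sum + e ≤ m * g) :
    GS3Inv m t g α A B (AddToBin St e (gs3strat m t A B hist St e)) := by
  obtain ⟨hlen, hbnd, hD⟩ := hInv
  have hAm : A < m := by rcases hAB with ⟨h1, h2⟩ | ⟨h1, h2⟩ <;> omega
  have hBm : B < m := by rcases hAB with ⟨h1, h2⟩ | ⟨h1, h2⟩ <;> omega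
  have hBA : ¬ (B = A) := by rcases hAB with ⟨h1, h2⟩ | ⟨h1, h2⟩ <;> omega
  have hAB' : ¬ (A = B) := by rcases hAB with ⟨h1, h2⟩ | ⟨h1, h2⟩ <;> omega
  obtain ⟨MG, hMG⟩ : ∃ k, m * g = k := ⟨_, rfl⟩
  rw [hMG] at hbud hD
  -- generic constructor for the new invariant
  have mk : ∀ b : ℕ, b < m → St.getD b 0 + e ≤ t - 1 →
      (MG + (AddToBin St e b).getD B 0 ≤ (AddToBin St e b).sum + (t - 1) ∨
       MG + (AddToBin St e b).getD A 0 ≤ (AddToBin St e b).sum + (t - 1) ∨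
       ((AddToBin St e b).getD A 0 ≤ α ∧
        2 * MG + 2 * (AddToBin St e b).getD B 0 + (AddToBin St e b).getD A 0 ≤
          2 * (AddToBin St e b).sum + 3 * (t - 1) ∧
        ∀ f, f < m - 2 → (AddToBin St e b).getD A 0 ≤ (AddToBin St e b).getD f 0)) →
      GS3Inv m t g α A B (AddToBin St e b) := by
    intro b hbm hfit hdisj
    have hbl : b < St.length := by rw [hlen]; exact hbm
    refine ⟨by rw [gs3_AddToBin_length St e b hbl]; exact hlen, ?_, by rw [hMG]; exact hdisj⟩
    intro x hx
    rcases gs3_AddToBin_mem St e b hbl x hx with h | h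
    · exact hbnd x h
    · rw [h]; exact hfit
  cases hf : gs3first m t St e with
  | some f0 =>
    have hstrat : gs3strat m t A B hist St e = f0 := by simp [gs3strat, hf]
    rw [hstrat]
    have hf2 := hf
    unfold gs3first at hf2
    have hmem := List.mem_of_find?_eq_some hf2
    have hf0 : f0 < m - 2 := List.mem_range.mp hmem
    have hfit : St.getD f0 0 + e ≤ t - 1 := by
      have := List.find?_some hf2
      simpa using this
    have hbm : f0 < m := by omega
    have hbl : f0 < St.length := by rw [hlen]; exact hbm
    have hsum := gs3_AddToBin_sum St e f0 hbl
    have hgA : (AddToBin St e f0).getD A 0 = St.getD A 0 := by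
      rw [gs3_AddToBin_getD St e f0 A hbl, if_neg (by omega)]
    have hgB : (AddToBin St e f0).getD B 0 = St.getD B 0 := by
      rw [gs3_AddToBin_getD St e f0 B hbl, if_neg (by omega)]
    apply mk f0 hbm hfit
    rcases hD with h | h | ⟨h1, h2, h3⟩
    · left; rw [hgB, hsum]; omega
    · right; left; rw [hgA, hsum]; omega
    · right; right
      refine ⟨by rw [hgA]; exact h1, by rw [hgA, hgB, hsum]; omega, ?_⟩
      intro f hfm
      rw [hgA, gs3_AddToBin_getD St e f0 f hbl]
      have := h3 f hfm
      by_cases hff : f0 = f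
      · rw [if_pos hff]; omega
      · rw [if_neg hff]; omega
  | none =>
    have hf2 := hf
    unfold gs3first at hf2
    have hnof : ∀ f, f < m - 2 → ¬ (St.getD f 0 + e ≤ t - 1) := by
      intro f hfm hcon
      have hmem : f ∈ List.range (m - 2) := List.mem_range.mpr hfm
      have := List.find?_eq_none.mp hf2 f hmem
      simp only [decide_eq_true_eq] at this
      exact this hcon
    by_cases hBfit : St.getD B 0 + e ≤ t - 1
    · have hstrat : gs3strat m t A B hist St e = B := by
        unfold gs3strat
        rw [hf]
        exact if_pos hBfit
      rw [hstrat]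
      have hbl : B < St.length := by rw [hlen]; exact hBm
      have hsum := gs3_AddToBin_sum St e B hbl
      have hgA : (AddToBin St e B).getD A 0 = St.getD A 0 := by
        rw [gs3_AddToBin_getD St e B A hbl, if_neg hBA]
      have hgB : (AddToBin St e B).getD B 0 = St.getD B 0 + e := by
        rw [gs3_AddToBin_getD St e B B hbl, if_pos rfl]
      have hgf : ∀ f, f < m - 2 → (AddToBin St e B).getD f 0 = St.getD f 0 := by
        intro f hfm
        rw [gs3_AddToBin_getD St e B f hbl, if_neg (by omega)]
      apply mk B hBm hBfit
      rcases hD with h | h | ⟨h1, h2, h3⟩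
      · left; rw [hgB, hsum]; omega
      · right; left; rw [hgA, hsum]; omega
      · right; right
        refine ⟨by rw [hgA]; exact h1, by rw [hgA, hgB, hsum]; omega, ?_⟩
        intro f hfm
        rw [hgA, hgf f hfm]
        exact h3 f hfm
    · have hstrat : gs3strat m t A B hist St e = A := by
        unfold gs3strat
        rw [hf]
        exact if_neg hBfit
      rw [hstrat]
      have hAfit : St.getD A 0 + e ≤ t - 1 := by
        rcases hD with h | h | ⟨h1, h2, h3⟩
        · omega
        · omega
        · omega
      have hbl : A < St.length := by rw [hlen]; exact hAm
      have hsum := gs3_AddToBin_sum St e A hbl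
      have hgA : (AddToBin St e A).getD A 0 = St.getD A 0 + e := by
        rw [gs3_AddToBin_getD St e A A hbl, if_pos rfl]
      have hgB : (AddToBin St e A).getD B 0 = St.getD B 0 := by
        rw [gs3_AddToBin_getD St e A B hbl, if_neg hAB']
      apply mk A hAm hAfit
      rcases hD with h | h | ⟨h1, h2, h3⟩
      · omega
      · right; left; rw [hgA, hsum]; omega
      · by_cases hD1 : MG + St.getD A 0 ≤ St.sum + (t - 1)
        · right; left; rw [hgA, hsum]; omega
        · left; rw [hgB, hsum]; omega

private lemma gs3_run (m t g α A B : ℕ) (hm : 3 ≤ m) (hga : g + α = t - 1)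
    (hAB : A = m - 2 ∧ B = m - 1 ∨ A = m - 1 ∧ B = m - 2) :
    ∀ (es hist St : List ℕ), GS3Inv m t g α A B St → (∀ e ∈ es, e ≤ g) →
      St.sum + es.sum ≤ m * g →
      ∀ x ∈ RunAlg (gs3strat m t A B) hist St es, x ≤ t - 1 := by
  intro es
  induction es with
  | nil =>
    intro hist St hInv _ _ x hx
    exact hInv.2.1 x (by simpa [RunAlg] using hx)
  | cons e es ih =>
    intro hist St hInv hle hbud x hx
    have hAm : A < m := by rcases hAB with ⟨h1, h2⟩ | ⟨h1, h2⟩ <;> omega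
    have hBm : B < m := by rcases hAB with ⟨h1, h2⟩ | ⟨h1, h2⟩ <;> omega
    obtain ⟨MG, hMG⟩ : ∃ k, m * g = k := ⟨_, rfl⟩
    rw [hMG] at hbud
    have hsumes : (e :: es).sum = e + es.sum := by simp
    have hstep := gs3_step m t g α A B hm hga hAB hist St e hInv
      (hle e (by simp)) (by rw [hMG]; omega)
    have hbm : gs3strat m t A B hist St e < m := gs3strat_lt m t A B hAm hBm hist St e
    have hsum' := gs3_AddToBin_sum St e _ (by rw [hInv.1]; exact hbm)
    refine ih (e :: hist) _ hstep (fun y hy => hle y (by simp [hy])) ?_ x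
      (by simpa [RunAlg] using hx)
    rw [hsum', hMG]
    omega

/-- Good Situation 3: in `Game(m,t,g)` with `m ≥ 3` and `α = (t-1) - g ≥ 0`, let
`(L, I)` be a bin configuration (with all loads at most `t-1`, as for every state
reached in the game) whose loads are sorted in descending order.  Let
`s = L₁ + … + L_{m-2}` be the sum of the loads of all bins except the last two;
let `r` (the last bin load requirement) be the smallest load `x` such that, if the
currently last bin had load `x`, the hypothesis of Good Situation 1 would hold after
reordering the bins by load, i.e. the sum of all loads except a least-loaded bin
(whose load is `min L_{m-1} x`, by sortedness) would be at least `(m-1)·g - α`;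
and let `o = t - r` be the overflow.  If `r ≤ t - 1` and one of the last two bins
(index `A ∈ {m-2, m-1}`, 0-based) has load strictly greater than
`(m-1)·g - α - o - s` and at most `α`, then the Algorithm has a winning strategy
from `(L, I)`: there is a strategy keeping every bin load at most `t - 1` against
every continuation that stays packable into `m` bins of capacity `g`. -/
theorem good_situation_three (m t g : ℕ) (hm : 3 ≤ m) (ht : g + 1 ≤ t)
    (L I : List ℕ) (hconf : BinConfig m L I) (hsorted : L.Pairwise (· ≥ ·))
    (hsafe : MaxBinValue L ≤ t - 1)
    (α s r o : ℕ)
    (hα : α = (t - 1) - g)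
    (hs : s = (L.take (m - 2)).sum)
    (hr : r = sInf {x : ℕ |
      (m - 1) * g - α ≤ L.dropLast.sum + x - min (L.getD (m - 2) 0) x})
    (ho : o = t - r)
    (hrt : r ≤ t - 1)
    (A : ℕ) (hA : A = m - 2 ∨ A = m - 1)
    (hAlo : (m - 1) * g - α - o - s < L.getD A 0)
    (hAhi : L.getD A 0 ≤ α) :
    AlgWins m t g I L := by
  have hga : g + α = t - 1 := by omega
  set B := if A = m - 2 then m - 1 else m - 2 with hBdef
  have hAB : A = m - 2 ∧ B = m - 1 ∨ A = m - 1 ∧ B = m - 2 := by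
    rcases hA with h | h
    · left; exact ⟨h, by rw [hBdef, if_pos h]⟩
    · right; exact ⟨h, by rw [hBdef, if_neg (by omega)]⟩
  have hAm : A < m := by rcases hAB with ⟨h1, h2⟩ | ⟨h1, h2⟩ <;> omega
  have hBm : B < m := by rcases hAB with ⟨h1, h2⟩ | ⟨h1, h2⟩ <;> omega
  have hlenL : L.length = m := hconf.1
  have hsafe' : ∀ x ∈ L, x ≤ t - 1 := by
    intro x hx
    exact le_trans (gs3_le_foldr_max hx) (by simpa [MaxBinValue] using hsafe)
  obtain ⟨hdec1, hdec2⟩ := gs3_decomp L (m - 2) (by omega)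
  rw [show m - 2 + 1 = m - 1 by omega] at hdec1
  have hsortf : ∀ f, f < m - 2 → L.getD A 0 ≤ L.getD f 0 := by
    intro f hf
    exact gs3_sorted_getD hsorted (by omega : f ≤ A) (by omega : A < L.length)
  -- the invariant holds initially
  have hInv0 : GS3Inv m t g α A B L := by
    refine ⟨hlenL, hsafe', ?_⟩
    obtain ⟨G2, hG2⟩ : ∃ k, (m - 1) * g = k := ⟨_, rfl⟩
    have hmg : m * g = G2 + g := by
      have h1 : m - 1 + 1 = m := by omega
      calc m * g = (m - 1 + 1) * g := by rw [h1]
      _ = (m - 1) * g + g := by rw [Nat.succ_mul]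
      _ = G2 + g := by rw [hG2]
    rw [hG2] at hAlo
    by_cases hcase : G2 ≤ α + (L.take (m - 2)).sum + L.getD (m - 2) 0
    · rcases hAB with ⟨hA', hB'⟩ | ⟨hA', hB'⟩
      · left; rw [hB', hmg]; omega
      · right; left; rw [hA', hmg]; omega
    · -- the interesting case : r = (m-1)*g - α - s
      have hx₀mem : (G2 - α - (L.take (m - 2)).sum) ∈ {x : ℕ |
          (m - 1) * g - α ≤ L.dropLast.sum + x - min (L.getD (m - 2) 0) x} := by
        simp only [Set.mem_setOf_eq]
        rw [hG2, hdec2, min_eq_left (by omega)]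
        omega
      have hle1 : r ≤ G2 - α - (L.take (m - 2)).sum := by
        rw [hr]; exact Nat.sInf_le hx₀mem
      have hge1 : G2 - α - (L.take (m - 2)).sum ≤ r := by
        by_contra hcon
        push_neg at hcon
        have hmem := Nat.sInf_mem (⟨_, hx₀mem⟩ : Set.Nonempty _)
        rw [← hr] at hmem
        simp only [Set.mem_setOf_eq] at hmem
        rw [hG2, hdec2] at hmem
        rcases le_total (L.getD (m - 2) 0) r with hmm | hmm
        · rw [min_eq_left hmm] at hmem; omega
        · rw [min_eq_right hmm] at hmem; omega
      have hrval : r = G2 - α - (L.take (m - 2)).sum := le_antisymm hle1 hge1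
      right; right
      refine ⟨hAhi, ?_, hsortf⟩
      rcases hAB with ⟨hA', hB'⟩ | ⟨hA', hB'⟩
      · rw [hA'] at hAlo hAhi ⊢
        rw [hB', hmg]
        omega
      · rw [hA'] at hAlo hAhi ⊢
        rw [hB', hmg]
        omega
  refine ⟨gs3strat m t A B, fun hist L' e => gs3strat_lt m t A B hAm hBm hist L' e, ?_⟩
  intro es hpos hpack
  obtain ⟨hL, P, hPsum, hPperm⟩ := hconf
  have hIsum : I.sum = L.sum := by
    rw [← hPperm.sum_eq, gs3_flatten_sum, hPsum]
  have hsum_le : es.sum + I.sum ≤ m * g := by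
    have := gs3_packable_sum hpack
    simpa [List.sum_append] using this
  have hmem_le : ∀ e ∈ es, e ≤ g := fun e he =>
    gs3_packable_mem hpack e (List.mem_append_left _ he)
  have hbud : L.sum + es.sum ≤ m * g := by
    obtain ⟨MG, hMG⟩ : ∃ k, m * g = k := ⟨_, rfl⟩
    rw [hMG] at hsum_le ⊢
    omega
  have hrun := gs3_run m t g α A B hm hga hAB es I L hInv0 hmem_le hbud
  simp only [MaxBinValue]
  exact gs3_foldr_max_le hrun
end

section
/- (Theorem OI_length) Let m, t, g be natural numbers with m > 0. For all natural numbers X and all lists of natural numbers ℓ and St, if OnlineInfeasible X ℓ St holds, then the sum of the elements of ℓ is at most m·g. -/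
/-- The load of a bin given the list of its items. -/
def BinSum (B : List ℕ) : ℕ := B.sum

/-- The largest bin load of a packing, given as a list of bins (lists of items). -/
def MaxBinSum (P : List (List ℕ)) : ℕ := (P.map BinSum).foldr max 0

/-- `CompletePacking ℓ P` : the packing `P` uses at least all the items of `ℓ`:
every natural number occurs in the concatenation of `P` at least as many times
as in `ℓ`. -/
def CompletePacking (ℓ : List ℕ) (P : List (List ℕ)) : Prop :=
  ∀ e, ℓ.count e ≤ P.flatten.count e

/-- `SolutionPacking m g ℓ P` : `P` is a certificate that the items of `ℓ` can be
packed into `m` bins of capacity `g`. -/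
def SolutionPacking (m g : ℕ) (ℓ : List ℕ) (P : List (List ℕ)) : Prop :=
  CompletePacking ℓ P ∧ P.length = m ∧ MaxBinSum P ≤ g

/-- The inductive predicate `OnlineInfeasible m t g X ℓ St` of the Coq
formalization: either (Overflow) some bin load of `St` is at least `t` and there
is a packing certificate for `ℓ`, or (Deadend) `St` has length at most `m` and
there is a positive item `e` (here an explicit constructor argument, which is
equivalent to the existential quantification of the Coq definition) such that,
whatever bin `b < m` it is packed into, the resulting state is again
`OnlineInfeasible` with fuel decreased by one. -/
inductive OnlineInfeasible (m t g : ℕ) : ℕ → List ℕ → List ℕ → Prop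
  | overflow (X : ℕ) (ℓ St : List ℕ) : t ≤ MaxBinValue St →
      (∃ P, SolutionPacking m g ℓ P) → OnlineInfeasible m t g X ℓ St
  | deadend (X : ℕ) (ℓ St : List ℕ) (e : ℕ) : St.length ≤ m → 0 < e →
      (∀ b, b < m → OnlineInfeasible m t g X (e :: ℓ) (AddToBin St e b)) →
      OnlineInfeasible m t g (X + 1) ℓ St

lemma flatten_sum_le (g : ℕ) : ∀ (P : List (List ℕ)), MaxBinSum P ≤ g →
    P.flatten.sum ≤ P.length * g := by
  intro P
  induction P with
  | nil => simp
  | cons B P ih =>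
    intro h
    simp [MaxBinSum, BinSum] at h ⊢
    have h2 := ih (by simp [MaxBinSum]; omega)
    simp at h2
    rw [Nat.add_mul, one_mul]
    omega

/-- Theorem `OI_length`: if `OnlineInfeasible X ℓ St` holds, then the sum of the
elements of `ℓ` is at most `m·g`. -/
theorem OI_length (m t g : ℕ) (hm : 0 < m) :
    ∀ (X : ℕ) (ℓ St : List ℕ), OnlineInfeasible m t g X ℓ St → ℓ.sum ≤ m * g := by
  intro X ℓ St h
  induction h with
  | overflow X ℓ St ht hP =>
    obtain ⟨P, hc, hlen, hmax⟩ := hP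
    have h1 : (ℓ : Multiset ℕ) ≤ (P.flatten : Multiset ℕ) := by
      rw [Multiset.le_iff_count]
      intro e
      simpa using hc e
    have h2 : ℓ.sum ≤ P.flatten.sum := by
      obtain ⟨u, hu⟩ := Multiset.le_iff_exists_add.mp h1
      have h3 : (P.flatten : Multiset ℕ).sum = (ℓ : Multiset ℕ).sum + u.sum := by
        rw [hu, Multiset.sum_add]
      rw [Multiset.sum_coe, Multiset.sum_coe] at h3
      omega
    calc ℓ.sum ≤ P.flatten.sum := h2
      _ ≤ P.length * g := flatten_sum_le g P hmax
      _ = m * g := by rw [hlen]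
  | deadend X ℓ St e hlen he hb ih =>
    have := ih 0 hm
    simp at this
    omega
end

section
/- (Correctness of the Coq formulation) Let m, t, g be natural numbers with m > 0. For every list of natural numbers ℓ, every list of natural numbers St, and every natural number X with X > m·g + 1 − (sum of the elements of ℓ), if OnlineInfeasible X ℓ St holds, then LowerBoundBS(ℓ, St) holds, i.e., the Adversary has a winning strategy in the Online Bin Stretching game Game(m,t,g) starting from previously sent items ℓ and current bin loads St. -/
section Aux

private def toM (B : List ℕ) : Multiset ℕ := (B : Multiset ℕ)

private lemma msum_mono {s t : Multiset ℕ} (h : s ≤ t) : s.sum ≤ t.sum := by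
  obtain ⟨u, rfl⟩ := Multiset.le_iff_exists_add.mp h
  simp

private lemma forall₂_mem_exists {α β : Type*} {r : α → β → Prop} :
    ∀ {S : List α} {T : List β}, List.Forall₂ r S T → ∀ s ∈ S, ∃ t ∈ T, r s t := by
  intro S T h
  induction h with
  | nil => intro s hs; simp at hs
  | cons hr _ ih =>
    intro s hs
    rcases List.mem_cons.mp hs with rfl | hs
    · exact ⟨_, List.mem_cons_self, hr⟩
    · obtain ⟨t, ht, hrt⟩ := ih s hs
      exact ⟨t, List.mem_cons_of_mem _ ht, hrt⟩

/-- Extract a list of sub-multisets summing to `s` from a list of multisets whose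
sum dominates `s`. -/
private lemma extract_packing :
    ∀ (T : List (Multiset ℕ)) (s : Multiset ℕ), s ≤ T.sum →
      ∃ S : List (Multiset ℕ), S.length = T.length ∧
        List.Forall₂ (· ≤ ·) S T ∧ S.sum = s := by
  intro T
  induction T with
  | nil =>
    intro s hs
    simp only [List.sum_nil, Multiset.le_zero] at hs
    exact ⟨[], rfl, List.Forall₂.nil, by simp [hs]⟩
  | cons t T ih =>
    intro s hs
    have h2 : s - t ≤ T.sum := by
      rw [tsub_le_iff_right]
      simpa [add_comm] using hs
    obtain ⟨S, hlen, hF, hsum⟩ := ih (s - t) h2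
    refine ⟨s ∩ t :: S, by simp [hlen], List.Forall₂.cons Multiset.inter_le_right hF, ?_⟩
    rw [List.sum_cons, hsum, add_comm]
    exact Multiset.sub_add_inter s t

private lemma coe_flatten (P : List (List ℕ)) :
    (P.flatten : Multiset ℕ) = (P.map toM).sum := by
  induction P with
  | nil => simp
  | cons B P ih =>
    simp only [List.flatten_cons, List.map_cons, List.sum_cons, ← ih]
    exact Multiset.coe_add B P.flatten

private lemma binSum_le_maxBinSum {P : List (List ℕ)} {B : List ℕ} (hB : B ∈ P) :
    BinSum B ≤ MaxBinSum P := by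
  induction P with
  | nil => simp at hB
  | cons C P ih =>
    rcases List.mem_cons.mp hB with rfl | hB
    · simp [MaxBinSum, le_max_iff]
    · simp only [MaxBinSum, List.map_cons, List.foldr_cons, le_max_iff]
      exact Or.inr (ih hB)

private lemma solutionPacking_packable {m g : ℕ} {ℓ : List ℕ} {P : List (List ℕ)}
    (h : SolutionPacking m g ℓ P) : Packable m g ℓ := by
  obtain ⟨hc, hlen, hmax⟩ := h
  have hle : (ℓ : Multiset ℕ) ≤ (P.flatten : Multiset ℕ) := by
    rw [Multiset.le_iff_count]
    intro e
    simpa using hc e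
  rw [coe_flatten] at hle
  obtain ⟨S, hSlen, hF, hSsum⟩ := extract_packing _ _ hle
  refine ⟨S.map Multiset.toList, by simp [hSlen, hlen], ?_, ?_⟩
  · intro B hB
    simp only [List.mem_map] at hB
    obtain ⟨s, hs, rfl⟩ := hB
    obtain ⟨tm, htm, hstm⟩ := forall₂_mem_exists hF s hs
    simp only [List.mem_map] at htm
    obtain ⟨B', hB', rfl⟩ := htm
    calc (Multiset.toList s).sum = s.sum := by
            rw [← Multiset.sum_toList]
      _ ≤ (toM B').sum := msum_mono hstm
      _ = BinSum B' := by simp [toM, BinSum]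
      _ ≤ MaxBinSum P := binSum_le_maxBinSum hB'
      _ ≤ g := hmax
  · rw [← Multiset.coe_eq_coe, coe_flatten]
    have heq : ((S.map Multiset.toList).map toM) = S := by
      rw [List.map_map]
      have : toM ∘ Multiset.toList = id := by
        funext s; simp [toM]
      rw [this, List.map_id]
    rw [heq, hSsum]

/-- Along any `OnlineInfeasible` derivation, the total size of the items sent so far
is at most `m * g` (since the derivation must bottom out in an overflow leaf,
which carries a packing certificate). -/
private lemma onlineInfeasible_sum_le {m t g X : ℕ} {ℓ St : List ℕ} (hm : 0 < m)
    (h : OnlineInfeasible m t g X ℓ St) : ℓ.sum ≤ m * g := by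
  induction h with
  | overflow X ℓ St ht hP =>
    obtain ⟨P, hc, hlen, hmax⟩ := hP
    have hle : (ℓ : Multiset ℕ) ≤ (P.flatten : Multiset ℕ) := by
      rw [Multiset.le_iff_count]; intro e; simpa using hc e
    have h1 : ℓ.sum ≤ P.flatten.sum := by
      have := msum_mono hle
      simpa using this
    have h2 : P.flatten.sum ≤ m * g := by
      rw [List.sum_flatten]
      calc (P.map List.sum).sum ≤ (P.map List.sum).length • g := by
            refine List.sum_le_card_nsmul _ _ ?_
            intro x hx
            simp only [List.mem_map] at hx
            obtain ⟨B, hB, rfl⟩ := hx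
            exact le_trans (binSum_le_maxBinSum hB) hmax
        _ = m * g := by simp [hlen, smul_eq_mul]
    exact le_trans h1 h2
  | deadend X ℓ St e hlen he hrec ih =>
    have := ih 0 hm
    simp only [List.sum_cons] at this
    omega

end Aux

/-- Correctness of the Coq formulation: for every `ℓ`, `St` and every
`X > m·g + 1 - (sum of ℓ)` (with truncated natural subtraction, as in Coq),
if `OnlineInfeasible X ℓ St` holds then `LowerBoundBS(ℓ, St)` holds, i.e. the
Adversary has a winning strategy in `Game(m,t,g)` from previously sent items `ℓ`
and current bin loads `St`. -/


theorem onlineInfeasible_implies_lowerBoundBS (m t g : ℕ) (hm : 0 < m)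
    (ℓ St : List ℕ) (X : ℕ) (hX : m * g + 1 - ℓ.sum < X)
    (h : OnlineInfeasible m t g X ℓ St) :
    AdvWins m t g ℓ St := by
  induction h with
  | overflow X ℓ St ht hP =>
    exact AdvWins.win ℓ St ht (solutionPacking_packable hP.choose_spec)
  | deadend X ℓ St e hlen he hrec ih =>
    have hsum : e + ℓ.sum ≤ m * g := by
      have := onlineInfeasible_sum_le hm (hrec 0 hm)
      simpa using this
    refine AdvWins.step ℓ St e he (fun b hb => ih b hb ?_)
    simp only [List.sum_cons]
    omega
end
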